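/- Let p be a prime with p ≡ 1 (mod 4) and let ℓ be a unit of ℤ/pℤ of multiplicative order 4. Define permutations of ℤ/pℤ by σ₀(x) = ℓ·x and σ₁(x) = ℓ·(x+1) − 1. Then the commutator σ₀⁻¹ ∘ σ₁⁻¹ ∘ σ₀ ∘ σ₁ is a nontrivial translation, i.e., equal to the map x ↦ x + c for some c ∈ ℤ/pℤ with c ≠ 0. -/

import Mathlib

/-- Let `p ≡ 1 (mod 4)` be prime and `ℓ` a unit of `ℤ/pℤ` of order `4`.
With `σ₀(x) = ℓ·x` and `σ₁(x) = ℓ·(x+1) − 1`, the commutator `σ₀⁻¹ ∘ σ₁⁻¹ ∘ σ₀ ∘ σ₁`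
is a nontrivial translation `x ↦ x + c`, `c ≠ 0`. -/
theorem stmt16 (p : ℕ) [Fact p.Prime] (hp : p % 4 = 1)
    (ℓ : (ZMod p)ˣ) (hℓ : orderOf ℓ = 4)
    (σ₀ σ₁ : Equiv.Perm (ZMod p))
    (hσ₀ : ∀ x, σ₀ x = (ℓ : ZMod p) * x)
    (hσ₁ : ∀ x, σ₁ x = (ℓ : ZMod p) * (x + 1) - 1) :
    ∃ c : ZMod p, c ≠ 0 ∧ ∀ x, (σ₀⁻¹ * σ₁⁻¹ * σ₀ * σ₁) x = x + c := by
  have hℓ0 : (ℓ : ZMod p) ≠ 0 := ℓ.ne_zero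
  have hℓ1 : (ℓ : ZMod p) ≠ 1 := by
    intro h
    have : ℓ = 1 := Units.ext h
    rw [this, orderOf_one] at hℓ
    omega
  have hc : (ℓ : ZMod p) * (ℓ : ZMod p)⁻¹ = 1 := mul_inv_cancel₀ hℓ0
  have hinv1 : (ℓ : ZMod p)⁻¹ ≠ 1 := fun h => hℓ1 (inv_eq_one.mp h)
  have h0inv : ∀ y, σ₀⁻¹ y = (ℓ : ZMod p)⁻¹ * y := by
    intro y
    apply σ₀.injective
    rw [Equiv.Perm.coe_inv, Equiv.apply_symm_apply, hσ₀]
    linear_combination (-y) * hc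
  have h1inv : ∀ y, σ₁⁻¹ y = (ℓ : ZMod p)⁻¹ * (y + 1) - 1 := by
    intro y
    apply σ₁.injective
    rw [Equiv.Perm.coe_inv, Equiv.apply_symm_apply, hσ₁]
    linear_combination (-(y + 1)) * hc
  refine ⟨((ℓ : ZMod p)⁻¹ - 1)^2, pow_ne_zero _ (sub_ne_zero.mpr hinv1), fun x => ?_⟩
  simp only [Equiv.Perm.mul_apply, hσ₀, hσ₁, h0inv, h1inv]
  linear_combination ((x + 1) * ((ℓ : ZMod p) * (ℓ : ZMod p)⁻¹ + 1) - (ℓ : ZMod p)⁻¹) * hc
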